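/- Let Ω be a compact metric space, T : Ω → Ω a homeomorphism, and A : Ω → SL(2l, ℂ) continuous. If the cocycle (T, A) does not satisfy the uniform exponential growth condition, then there exist ω ∈ Ω and a unit vector v ∈ ℂ^{2l} such that ‖Aₙ(ω)v‖ ≤ 1 for all n ∈ ℤ. -/

import Mathlib

noncomputable section
open Matrix

variable {Ω : Type*} {ι : Type*} [Fintype ι] [DecidableEq ι]

/-- Forward transfer matrices: `fwd T A n ω = A(Tⁿ⁻¹ω) ⋯ A(ω)`. -/
def fwd (T : Equiv.Perm Ω) (A : Ω → Matrix ι ι ℂ) : ℕ → Ω → Matrix ι ι ℂ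
  | 0, _ => 1
  | n + 1, ω => A ((⇑T)^[n] ω) * fwd T A n ω

/-- Backward transfer matrices: `bwd T A n ω = A(T⁻ⁿω)⁻¹ ⋯ A(T⁻¹ω)⁻¹`. -/
def bwd (T : Equiv.Perm Ω) (A : Ω → Matrix ι ι ℂ) : ℕ → Ω → Matrix ι ι ℂ
  | 0, _ => 1
  | n + 1, ω => (A ((⇑T.symm)^[n + 1] ω))⁻¹ * bwd T A n ω

/-- The transfer matrices `Aₙ(ω)`, `n : ℤ`, of the cocycle `(T, A)`. -/
def transfer (T : Equiv.Perm Ω) (A : Ω → Matrix ι ι ℂ) (n : ℤ) (ω : Ω) : Matrix ι ι ℂ :=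
  if 0 ≤ n then fwd T A n.toNat ω else bwd T A (-n).toNat ω

/-! ### Auxiliary lemmas: abstract growth dichotomy -/

section Growth

private lemma fUpper (C : ℝ) (R : ℕ) (hC : 1 ≤ C) (hR : 1 ≤ R) (f : ℤ → ℝ) (hf0 : f 0 = 1)
    (hstep : ∀ n m : ℤ, |m| ≤ (R : ℤ) → f (n + m) ≤ C * f n) :
    ∀ j : ℕ, ∀ m : ℤ, |m| ≤ (j : ℤ) → f m ≤ C ^ j := by
  intro j
  induction j with
  | zero =>
    intro m hm
    have : m = 0 := by have := abs_le.mp hm; omega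
    simp [this, hf0]
  | succ j ih =>
    intro m hm
    have hCj : (0:ℝ) < C ^ j := pow_pos (lt_of_lt_of_le one_pos hC) j
    rcases le_or_gt |m| (j : ℤ) with h | h
    · calc f m ≤ C ^ j := ih m h
        _ ≤ C ^ (j+1) := by
          rw [pow_succ]
          nlinarith
    · rcases le_or_gt 0 m with hm0 | hm0
      · have h1 : m = (m - 1) + 1 := by ring
        have : f ((m-1) + 1) ≤ C * f (m - 1) := by
          apply hstep
          simpa using hR
        have h2 : f (m - 1) ≤ C ^ j := by
          apply ih
          rw [abs_of_nonneg hm0] at hm h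
          rw [abs_le]; omega
        rw [← h1] at this
        calc f m ≤ C * f (m-1) := this
          _ ≤ C * C ^ j := by nlinarith
          _ = C ^ (j+1) := by ring
      · have h1 : m = (m + 1) + (-1) := by ring
        have : f ((m+1) + (-1)) ≤ C * f (m + 1) := by
          apply hstep
          simpa using hR
        have h2 : f (m + 1) ≤ C ^ j := by
          apply ih
          rw [abs_of_neg hm0] at hm h
          rw [abs_le]; omega
        rw [← h1] at this
        calc f m ≤ C * f (m+1) := this
          _ ≤ C * C ^ j := by nlinarith
          _ = C ^ (j+1) := by ring

private lemma fLower (C : ℝ) (R : ℕ) (hC : 1 ≤ C) (hR : 1 ≤ R) (f : ℤ → ℝ) (hf0 : f 0 = 1)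
    (hstep : ∀ n m : ℤ, |m| ≤ (R : ℤ) → f (n + m) ≤ C * f n) :
    ∀ n : ℕ, C⁻¹ ^ n ≤ f (n : ℤ) := by
  intro n
  have hC0 : (0:ℝ) < C := lt_of_lt_of_le one_pos hC
  induction n with
  | zero => simp [hf0]
  | succ n ih =>
    have key : f ((n+1 : ℕ) : ℤ) ≥ C⁻¹ * f (n : ℤ) := by
      have := hstep ((n:ℤ)+1) (-1) (by simpa using hR)
      have he : ((n:ℤ)+1) + (-1) = (n:ℤ) := by ring
      rw [he] at this
      rw [ge_iff_le, inv_mul_le_iff₀ hC0]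
      push_cast
      linarith
    calc C⁻¹ ^ (n+1) = C⁻¹ * C⁻¹ ^ n := by ring
      _ ≤ C⁻¹ * f (n:ℤ) := by
          have : (0:ℝ) < C⁻¹ := inv_pos.mpr hC0
          nlinarith
      _ ≤ f ((n+1:ℕ) : ℤ) := key

private lemma sBound (R : ℕ) (s : ℕ → ℤ) (hs0 : s 0 = 0)
    (hsd : ∀ k, |s (k+1) - s k| ≤ (R : ℤ)) :
    ∀ k, |s k| ≤ (k : ℤ) * R := by
  intro k
  induction k with
  | zero => simp [hs0]
  | succ k ih =>
    have h2 := abs_le.mp (hsd k)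
    have h3 := abs_le.mp ih
    rw [abs_le]
    push_cast
    constructor <;> nlinarith

private lemma growth_pos (C ε lam : ℝ) (R K : ℕ) (hC : 2 ≤ C) (hε : 0 < ε) (hR : 1 ≤ R)
    (hlam1 : 1 < lam) (hlamR : lam ^ R = 1 + ε)
    (f : ℤ → ℝ) (hf0 : f 0 = 1) (hfpos : ∀ n, 0 < f n)
    (hstep : ∀ n m : ℤ, |m| ≤ (R : ℤ) → f (n + m) ≤ C * f n)
    (s : ℕ → ℤ) (hs0 : s 0 = 0)
    (hgrow : ∀ k, (1+ε)^k ≤ f (s k))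
    (hsd : ∀ k, |s (k+1) - s k| ≤ (R : ℤ))
    (hK : C ^ R < (1+ε)^K)
    (hposK : (R : ℤ) < s K) :
    ∀ n : ℕ, (C⁻¹)^((K+1)*R) * (lam⁻¹)^((K+1)*R) * C⁻¹ * lam ^ n ≤ f (n : ℤ) := by
  have hC1 : (1:ℝ) ≤ C := by linarith
  have hC0 : (0:ℝ) < C := by linarith
  have hε1 : (1:ℝ) < 1 + ε := by linarith
  have hlam0 : (0:ℝ) < lam := by linarith
  have hup := fUpper C R hC1 hR f hf0 hstep
  have hlow := fLower C R hC1 hR f hf0 hstep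
  have persist : ∀ k, K ≤ k → (R : ℤ) < s k := by
    intro k hk
    induction k with
    | zero =>
      have : K = 0 := Nat.le_zero.mp hk
      rw [← this]; exact hposK
    | succ k ih =>
      rcases Nat.lt_or_ge K (k+1) with h | h
      · have hk' : K ≤ k := by omega
        have hsk := ih hk'
        have habs : (R : ℤ) < |s (k+1)| := by
          by_contra hcon
          push_neg at hcon
          have h1 : f (s (k+1)) ≤ C ^ R := hup R (s (k+1)) hcon
          have h2 : (1+ε)^(k+1) ≤ f (s (k+1)) := hgrow (k+1)
          have h3 : (1+ε)^K ≤ (1+ε)^(k+1) := pow_le_pow_right₀ (le_of_lt hε1) (by omega)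
          linarith
        have hd := abs_le.mp (hsd k)
        have hpos : 0 < s (k+1) := by omega
        rw [abs_of_pos hpos] at habs
        exact habs
      · have : K = k + 1 := by omega
        rw [← this]; exact hposK
  have hsb := sBound R s hs0 hsd
  intro n
  set N₀ := (K+1)*R with hN₀
  rcases le_or_gt n N₀ with hn | hn
  · have h1 : C⁻¹ ^ N₀ ≤ f (n:ℤ) := by
      calc C⁻¹ ^ N₀ ≤ C⁻¹ ^ n := by
            apply pow_le_pow_of_le_one (by positivity) _ hn
            rw [inv_le_one_iff₀]; right; exact hC1
        _ ≤ f (n:ℤ) := hlow n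
    calc (C⁻¹)^N₀ * (lam⁻¹)^N₀ * C⁻¹ * lam ^ n
        ≤ (C⁻¹)^N₀ * (lam⁻¹)^N₀ * 1 * lam ^ N₀ := by
          have hinv : C⁻¹ ≤ 1 := by rw [inv_le_one_iff₀]; right; exact hC1
          have hlam0' : (0:ℝ) < lam := by linarith
          gcongr <;> first | positivity | linarith
      _ = (C⁻¹)^N₀ * ((lam⁻¹)^N₀ * lam ^ N₀) := by ring
      _ = (C⁻¹)^N₀ := by
          rw [← mul_pow, inv_mul_cancel₀ (ne_of_gt hlam0), one_pow, mul_one]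
      _ ≤ f (n:ℤ) := h1
  · have hex : ∃ k, K ≤ k ∧ (n:ℤ) ≤ s k := by
      by_contra hcon
      push_neg at hcon
      have hb : ∀ k, K ≤ k → f (s k) ≤ C ^ n := by
        intro k hk
        apply hup n
        have h1 := persist k hk
        have h2 := hcon k hk
        rw [abs_of_pos (by omega : (0:ℤ) < s k)]
        omega
      obtain ⟨k0, hk0⟩ := pow_unbounded_of_one_lt (C ^ n) hε1
      have h1 := hb (max K k0) (le_max_left _ _)
      have h2 := hgrow (max K k0)
      have h3 : (1+ε)^k0 ≤ (1+ε)^(max K k0) :=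
        pow_le_pow_right₀ (le_of_lt hε1) (le_max_right _ _)
      linarith
    classical
    let P : ℕ → Prop := fun k => K ≤ k ∧ (n:ℤ) ≤ s k
    have hPfind : ∃ k, P k := hex
    set k := Nat.find hPfind with hkdef
    obtain ⟨hkK, hkn⟩ : P k := Nat.find_spec hPfind
    have hkgtK : K < k := by
      rcases Nat.lt_or_ge K k with h | h
      · exact h
      · exfalso
        have hkK' : k = K := by omega
        have h1 : s K ≤ (K:ℤ)*R := le_trans (le_abs_self _) (hsb K)
        have h2 : ((K:ℤ))*R < (n:ℤ) := by
          have : (N₀ : ℤ) < (n:ℤ) := by exact_mod_cast hn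
          push_cast [hN₀] at this ⊢
          nlinarith [Nat.one_le_iff_ne_zero.mp hR]
        rw [hkK'] at hkn
        omega
    have hprev : s (k-1) < (n:ℤ) := by
      have hnotP : ¬ P (k-1) := Nat.find_min hPfind (by omega)
      have hK1 : K ≤ k - 1 := by omega
      by_contra hcon
      push_neg at hcon
      exact hnotP ⟨hK1, hcon⟩
    have hstepk : |s k - s (k-1)| ≤ (R:ℤ) := by
      have := hsd (k-1)
      have hk1 : k - 1 + 1 = k := by omega
      rwa [hk1] at this
    have hwindow : |s k - (n:ℤ)| ≤ (R:ℤ) := by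
      have := abs_le.mp hstepk
      rw [abs_le]
      omega
    have hfn : f (s k) ≤ C * f (n:ℤ) := by
      have := hstep (n:ℤ) (s k - (n:ℤ)) hwindow
      have he : (n:ℤ) + (s k - (n:ℤ)) = s k := by ring
      rwa [he] at this
    have hnkR : (n:ℕ) ≤ k * R := by
      have h1 : s k ≤ (k:ℤ) * R := le_trans (le_abs_self _) (hsb k)
      have : (n:ℤ) ≤ (k:ℤ)*R := le_trans hkn h1
      exact_mod_cast this
    have h1 : (1+ε)^k ≤ f (s k) := hgrow k
    have h2 : lam ^ n ≤ (1+ε)^k := by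
      calc lam ^ n ≤ lam ^ (k*R) := pow_le_pow_right₀ (le_of_lt hlam1) hnkR
        _ = (lam ^ R)^k := by rw [← pow_mul, Nat.mul_comm]
        _ = (1+ε)^k := by rw [hlamR]
    have h4 : C⁻¹ * lam ^ n ≤ f (n:ℤ) := by
      rw [inv_mul_le_iff₀ hC0]; linarith
    calc (C⁻¹)^N₀ * (lam⁻¹)^N₀ * C⁻¹ * lam ^ n
        ≤ 1 * 1 * C⁻¹ * lam ^ n := by
          have e1 : (C⁻¹:ℝ) ≤ 1 := by rw [inv_le_one_iff₀]; right; exact hC1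
          have e2 : (lam⁻¹:ℝ) ≤ 1 := by rw [inv_le_one_iff₀]; right; linarith
          have q1 : (C⁻¹:ℝ)^N₀ ≤ 1 := pow_le_one₀ (by positivity) e1
          have q2 : (lam⁻¹:ℝ)^N₀ ≤ 1 := pow_le_one₀ (by positivity) e2
          gcongr <;> positivity
      _ = C⁻¹ * lam ^ n := by ring
      _ ≤ f (n:ℤ) := h4

/-- The abstract growth dichotomy: constants `β, lam` depend only on `C, ε, R`. -/
private lemma growth_main (C ε : ℝ) (R : ℕ) (hC : 2 ≤ C) (hε : 0 < ε) (hR : 1 ≤ R) :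
    ∃ β : ℝ, 0 < β ∧ ∃ lam : ℝ, 1 < lam ∧ ∀ f : ℤ → ℝ, f 0 = 1 → (∀ n, 0 < f n) →
      (∀ n m : ℤ, |m| ≤ (R : ℤ) → f (n + m) ≤ C * f n) →
      (∀ n : ℤ, ∃ r : ℤ, |r| ≤ (R : ℤ) ∧ (1+ε) * f n ≤ f (n + r)) →
      (∀ n : ℕ, β * lam ^ n ≤ f (n : ℤ)) ∨ (∀ n : ℕ, β * lam ^ n ≤ f (-(n : ℤ))) := by
  have hC0 : (0:ℝ) < C := by linarith
  have hC1 : (1:ℝ) ≤ C := by linarith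
  have hε1 : (1:ℝ) < 1 + ε := by linarith
  have hR0 : (0:ℝ) < (R:ℝ) := by exact_mod_cast hR
  set lam : ℝ := (1+ε) ^ ((R:ℝ)⁻¹) with hlamdef
  have hlam1 : 1 < lam := by
    rw [hlamdef]
    exact (Real.one_lt_rpow_iff_of_pos (by linarith)).mpr (Or.inl ⟨hε1, by positivity⟩)
  have hlamR : lam ^ R = 1 + ε := by
    rw [hlamdef, ← Real.rpow_natCast ((1+ε) ^ ((R:ℝ)⁻¹)) R, ← Real.rpow_mul (by linarith),
      inv_mul_cancel₀ (ne_of_gt hR0), Real.rpow_one]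
  obtain ⟨K, hK⟩ := pow_unbounded_of_one_lt (C ^ R) hε1
  set β : ℝ := (C⁻¹)^((K+1)*R) * (lam⁻¹)^((K+1)*R) * C⁻¹ with hβdef
  have hβ : 0 < β := by
    rw [hβdef]
    have : (0:ℝ) < lam := by linarith
    positivity
  refine ⟨β, hβ, lam, hlam1, ?_⟩
  intro f hf0 hfpos hstep hexp
  choose r hr1 hr2 using hexp
  set s : ℕ → ℤ := fun k => Nat.rec 0 (fun _ m => m + r m) k with hsdef
  have hs0 : s 0 = 0 := rfl
  have hssucc : ∀ k, s (k+1) = s k + r (s k) := fun k => rfl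
  have hsd : ∀ k, |s (k+1) - s k| ≤ (R:ℤ) := by
    intro k; rw [hssucc]; simpa using hr1 (s k)
  have hgrow : ∀ k, (1+ε)^k ≤ f (s k) := by
    intro k
    induction k with
    | zero => simp [hs0, hf0]
    | succ k ih =>
      have h1 := hr2 (s k)
      rw [← hssucc] at h1
      calc (1+ε)^(k+1) = (1+ε) * (1+ε)^k := by ring
        _ ≤ (1+ε) * f (s k) := by nlinarith
        _ ≤ f (s (k+1)) := h1
  have hsK : (R:ℤ) < |s K| := by
    by_contra hcon
    push_neg at hcon
    have h1 : f (s K) ≤ C ^ R := fUpper C R hC1 hR f hf0 hstep R (s K) hcon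
    have h2 := hgrow K
    linarith
  rcases le_or_gt (s K) 0 with hneg | hpos
  · right
    have habs : (R:ℤ) < -(s K) := by
      rw [abs_of_nonpos hneg] at hsK; exact hsK
    have := growth_pos C ε lam R K hC hε hR hlam1 hlamR (fun m => f (-m)) (by simpa using hf0)
      (fun n => hfpos (-n))
      (by
        intro n m hm
        have := hstep (-n) (-m) (by rwa [abs_neg])
        have he : -n + -m = -(n+m) := by ring
        rwa [he] at this)
      (fun k => -(s k)) (by simp [hs0])
      (by intro k; simpa using hgrow k)
      (by intro k; rw [show -s (k+1) - -s k = -(s (k+1) - s k) by ring, abs_neg]; exact hsd k)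
      hK habs
    intro n
    exact this n
  · left
    have habs : (R:ℤ) < s K := by rw [abs_of_pos hpos] at hsK; exact hsK
    exact growth_pos C ε lam R K hC hε hR hlam1 hlamR f hf0 hfpos hstep s hs0 hgrow hsd hK habs

end Growth

/-! ### Auxiliary lemmas: cocycle identities for `transfer` -/

section Cocycle

variable (T : Equiv.Perm Ω) (A : Ω → Matrix ι ι ℂ) (hSL : ∀ ω, (A ω).det = 1)

lemma transfer_zero (ω : Ω) : transfer T A 0 ω = 1 := by
  simp [transfer, fwd]

lemma zpow_apply_nonneg (n : ℤ) (hn : 0 ≤ n) (ω : Ω) :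
    (T ^ n) ω = (⇑T)^[n.toNat] ω := by
  rw [Equiv.Perm.iterate_eq_pow]
  congr 1
  rw [← zpow_natCast]
  congr 1
  omega

lemma zpow_apply_neg (m : ℕ) (ω : Ω) :
    (T ^ (-(m:ℤ))) ω = (⇑T.symm)^[m] ω := by
  rw [_root_.zpow_neg, zpow_natCast, ← inv_pow, ← Equiv.Perm.iterate_eq_pow]
  rfl

lemma zpow_comp (a b : ℤ) (ω : Ω) : (T ^ a) ((T ^ b) ω) = (T ^ (a + b)) ω := by
  rw [← Equiv.Perm.mul_apply, ← _root_.zpow_add]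

include hSL in
lemma transfer_succ (n : ℤ) (ω : Ω) :
    transfer T A (n + 1) ω = A ((T ^ n) ω) * transfer T A n ω := by
  have hu : ∀ x, IsUnit (A x).det := fun x => by rw [hSL]; exact isUnit_one
  rcases le_or_gt 0 n with hn | hn
  · have h1 : (0:ℤ) ≤ n + 1 := by omega
    have h2 : (n+1).toNat = n.toNat + 1 := by omega
    rw [transfer, transfer, if_pos h1, if_pos hn, h2, zpow_apply_nonneg T n hn]
    rfl
  · rcases eq_or_lt_of_le (by omega : n + 1 ≤ 0) with he | hlt
    · have hn1 : n = -1 := by omega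
      subst hn1
      rw [show (-1:ℤ) + 1 = 0 by ring, transfer_zero]
      have hrhs : transfer T A (-1) ω = (A ((⇑T.symm)^[1] ω))⁻¹ * 1 := by
        rw [transfer, if_neg (by omega : ¬ (0:ℤ) ≤ -1)]
        rfl
      rw [hrhs, mul_one, show (-1:ℤ) = -((1:ℕ):ℤ) by norm_num, zpow_apply_neg T 1 ω]
      exact (Matrix.mul_nonsing_inv _ (hu _)).symm
    · have h1 : ¬ (0:ℤ) ≤ n + 1 := by omega
      have h2 : ¬ (0:ℤ) ≤ n := by omega
      obtain ⟨j, hj⟩ : ∃ j : ℕ, (-n).toNat = j + 1 := ⟨(-n).toNat - 1, by omega⟩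
      have hm1 : (-(n+1)).toNat = j := by omega
      rw [transfer, transfer, if_neg h1, if_neg h2, hm1, hj]
      have hb : bwd T A (j+1) ω = (A ((⇑T.symm)^[j+1] ω))⁻¹ * bwd T A j ω := rfl
      have hτ : (T ^ n) ω = (⇑T.symm)^[j+1] ω := by
        rw [show n = -(((j+1):ℕ):ℤ) by omega, zpow_apply_neg T (j+1) ω]
      rw [hb, hτ, ← Matrix.mul_assoc, Matrix.mul_nonsing_inv _ (hu _), Matrix.one_mul]

include hSL in
lemma transfer_pred (n : ℤ) (ω : Ω) :
    transfer T A (n - 1) ω = (A ((T ^ (n-1)) ω))⁻¹ * transfer T A n ω := by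
  have h := transfer_succ T A hSL (n-1) ω
  rw [show n - 1 + 1 = n by ring] at h
  rw [h, ← Matrix.mul_assoc,
    Matrix.nonsing_inv_mul _ (by rw [hSL]; exact isUnit_one), Matrix.one_mul]

include hSL in
lemma transfer_cocycle (m n : ℤ) (ω : Ω) :
    transfer T A (m + n) ω = transfer T A m ((T ^ n) ω) * transfer T A n ω := by
  induction m using Int.induction_on with
  | zero => rw [zero_add, transfer_zero, Matrix.one_mul]
  | succ i ih =>
    have e1 : (i:ℤ) + 1 + n = ((i:ℤ) + n) + 1 := by ring
    have lhs : transfer T A ((i:ℤ) + 1 + n) ω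
        = A ((T ^ ((i:ℤ) + n)) ω) * (transfer T A i ((T ^ n) ω) * transfer T A n ω) := by
      rw [e1, transfer_succ T A hSL, ih]
    have rhs : transfer T A ((i:ℤ)+1) ((T ^ n) ω) * transfer T A n ω
        = A ((T ^ ((i:ℤ) + n)) ω) * (transfer T A i ((T ^ n) ω) * transfer T A n ω) := by
      rw [transfer_succ T A hSL, zpow_comp, Matrix.mul_assoc]
    rw [lhs, rhs]
  | pred i ih =>
    have e1 : -(i:ℤ) - 1 + n = (-(i:ℤ) + n) - 1 := by ring
    have e2 : -(i:ℤ) + n - 1 = -(i:ℤ) - 1 + n := by ring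
    have lhs : transfer T A (-(i:ℤ) - 1 + n) ω
        = (A ((T ^ (-(i:ℤ) - 1 + n)) ω))⁻¹
            * (transfer T A (-(i:ℤ)) ((T ^ n) ω) * transfer T A n ω) := by
      rw [e1, transfer_pred T A hSL, ih, e2]
    have rhs : transfer T A (-(i:ℤ)-1) ((T ^ n) ω) * transfer T A n ω
        = (A ((T ^ (-(i:ℤ) - 1 + n)) ω))⁻¹
            * (transfer T A (-(i:ℤ)) ((T ^ n) ω) * transfer T A n ω) := by
      rw [show -(i:ℤ)-1 = -(i:ℤ) - 1 from rfl, transfer_pred T A hSL, zpow_comp,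
        Matrix.mul_assoc]
    rw [lhs, rhs]

include hSL in
lemma transfer_det (n : ℤ) (ω : Ω) : (transfer T A n ω).det = 1 := by
  induction n using Int.induction_on with
  | zero => rw [transfer_zero]; simp
  | succ i ih =>
    rw [transfer_succ T A hSL, Matrix.det_mul, hSL, ih, mul_one]
  | pred i ih =>
    rw [show -(i:ℤ) - 1 = (-(i:ℤ)) - 1 by ring, transfer_pred T A hSL, Matrix.det_mul, ih,
      Matrix.det_nonsing_inv, hSL, mul_one]
    simp

end Cocycle

/-! ### Auxiliary lemmas: continuity and norm bounds -/

section Cont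

variable [TopologicalSpace Ω] (T : Ω ≃ₜ Ω) (A : Ω → Matrix ι ι ℂ)
  (hA : Continuous A) (hSL : ∀ ω, (A ω).det = 1)

omit [TopologicalSpace Ω] in
include hSL in
lemma Ainv_eq_adjugate : ∀ x, (A x)⁻¹ = (A x).adjugate := by
  intro x
  rw [Matrix.inv_def, hSL, Ring.inverse_one, one_smul]

include hA hSL in
lemma transfer_continuous (n : ℤ) : Continuous (fun ω => transfer T.toEquiv A n ω) := by
  have hfwd : ∀ k : ℕ, Continuous (fun ω => fwd T.toEquiv A k ω) := by
    intro k
    induction k with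
    | zero => exact continuous_const
    | succ k ih =>
      exact Continuous.matrix_mul (hA.comp (T.continuous.iterate k)) ih
  have hbwd : ∀ k : ℕ, Continuous (fun ω => bwd T.toEquiv A k ω) := by
    intro k
    induction k with
    | zero => exact continuous_const
    | succ k ih =>
      have h1 : Continuous (fun ω => (A ((⇑T.toEquiv.symm)^[k+1] ω))⁻¹) := by
        have hsc : Continuous (fun ω => A ((⇑T.toEquiv.symm)^[k+1] ω)) :=
          hA.comp (T.symm.continuous.iterate (k+1))
        simpa only [Ainv_eq_adjugate A hSL] using hsc.matrix_adjugate
      exact h1.matrix_mul ih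
  rcases le_or_gt 0 n with hn | hn
  · have he : (fun ω => transfer T.toEquiv A n ω) = fun ω => fwd T.toEquiv A n.toNat ω := by
      funext ω; simp only [transfer, if_pos hn]
    rw [he]; exact hfwd _
  · have he : (fun ω => transfer T.toEquiv A n ω) = fun ω => bwd T.toEquiv A (-n).toNat ω := by
      funext ω; simp only [transfer, if_neg (not_le.mpr hn)]
    rw [he]; exact hbwd _

end Cont

section NormBound

/-- entrywise bound on the matrix action w.r.t. the sup norm. -/
def opBound (M : Matrix ι ι ℂ) : ℝ := ∑ i, ∑ j, ‖M i j‖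

omit [DecidableEq ι] in
lemma opBound_nonneg (M : Matrix ι ι ℂ) : 0 ≤ opBound M := by
  apply Finset.sum_nonneg; intro i _; apply Finset.sum_nonneg; intro j _; positivity

omit [DecidableEq ι] in
lemma norm_mulVec_le (M : Matrix ι ι ℂ) (v : ι → ℂ) :
    ‖M.mulVec v‖ ≤ opBound M * ‖v‖ := by
  have h0 : (0:ℝ) ≤ opBound M * ‖v‖ := mul_nonneg (opBound_nonneg M) (norm_nonneg v)
  rw [pi_norm_le_iff_of_nonneg h0]
  intro i
  have h1 : M.mulVec v i = ∑ j, M i j * v j := by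
    simp [Matrix.mulVec, dotProduct]
  rw [h1]
  calc ‖∑ j, M i j * v j‖ ≤ ∑ j, ‖M i j * v j‖ := norm_sum_le _ _
    _ = ∑ j, ‖M i j‖ * ‖v j‖ := by simp [norm_mul]
    _ ≤ ∑ j, ‖M i j‖ * ‖v‖ := by
        apply Finset.sum_le_sum
        intro j _
        exact mul_le_mul_of_nonneg_left (norm_le_pi_norm v j) (norm_nonneg _)
    _ = (∑ j, ‖M i j‖) * ‖v‖ := by rw [Finset.sum_mul]
    _ ≤ opBound M * ‖v‖ := by
        apply mul_le_mul_of_nonneg_right _ (norm_nonneg v)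
        apply Finset.single_le_sum (f := fun i => ∑ j, ‖M i j‖)
          (fun i _ => Finset.sum_nonneg fun j _ => norm_nonneg _) (Finset.mem_univ i)

omit [DecidableEq ι] in
lemma continuous_opBound {X : Type*} [TopologicalSpace X] {M : X → Matrix ι ι ℂ}
    (hM : Continuous M) : Continuous fun x => opBound (M x) := by
  apply continuous_finset_sum
  intro i _
  apply continuous_finset_sum
  intro j _
  exact ((continuous_apply j).comp ((continuous_apply i).comp hM)).norm

lemma mulVec_ne_zero (M : Matrix ι ι ℂ) (hdet : M.det = 1) {v : ι → ℂ} (hv : v ≠ 0) :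
    M.mulVec v ≠ 0 := by
  intro hzero
  apply hv
  have hu : IsUnit M.det := by rw [hdet]; exact isUnit_one
  have h1 : M⁻¹.mulVec (M.mulVec v) = v := by
    rw [Matrix.mulVec_mulVec, Matrix.nonsing_inv_mul _ hu, Matrix.one_mulVec]
  rw [hzero] at h1
  rw [← h1]
  simp [Matrix.mulVec_zero]

end NormBound

section SupCont

lemma continuous_finset_sup' {X α : Type*} [TopologicalSpace X] {s : Finset α}
    (hs : s.Nonempty) (f : α → X → ℝ) (hf : ∀ a, Continuous (f a)) :
    Continuous fun x => s.sup' hs (fun a => f a x) := by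
  induction hs using Finset.Nonempty.cons_induction with
  | singleton a => simpa using hf a
  | cons a s ha hs ih =>
    have : (fun x => (Finset.cons a s ha).sup' (Finset.cons_nonempty ha) (fun b => f b x))
        = fun x => max (f a x) (s.sup' hs (fun b => f b x)) := by
      funext x
      rw [Finset.sup'_cons]
    rw [this]
    exact (hf a).max ih

end SupCont

/-- over a compact metric space with a homeomorphism `T` and continuous
`A : Ω → SL(2l, ℂ)`, if the cocycle `(T, A)` does not satisfy the uniform exponential
growth condition, then some orbit of a unit vector stays bounded by `1` for all `n : ℤ`. -/
theorem stmt4 {l : ℕ} [MetricSpace Ω] [CompactSpace Ω] (T : Ω ≃ₜ Ω)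
    (A : Ω → Matrix (Fin (2 * l)) (Fin (2 * l)) ℂ) (hA : Continuous A)
    (hSL : ∀ ω, (A ω).det = 1)
    (hnUG : ¬ ∃ β : ℝ, 0 < β ∧ ∃ lam : ℝ, 1 < lam ∧
      ∀ (ω : Ω) (v : Fin (2 * l) → ℂ), v ≠ 0 →
        (∀ n : ℕ, β * lam ^ n * ‖v‖ ≤ ‖(transfer T.toEquiv A (n : ℤ) ω).mulVec v‖) ∨
        (∀ n : ℕ, β * lam ^ n * ‖v‖ ≤ ‖(transfer T.toEquiv A (-(n : ℤ)) ω).mulVec v‖)) :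
    ∃ (ω : Ω) (v : Fin (2 * l) → ℂ), ‖v‖ = 1 ∧
      ∀ n : ℤ, ‖(transfer T.toEquiv A n ω).mulVec v‖ ≤ 1 := by
  by_contra hcon
  push_neg at hcon
  -- hcon : ∀ ω v, ‖v‖ = 1 → ∃ n, 1 < ‖(transfer T.toEquiv A n ω).mulVec v‖
  apply hnUG
  cases isEmpty_or_nonempty Ω with
  | inl hempty => exact ⟨1, one_pos, 2, one_lt_two, fun ω => (hempty.false ω).elim⟩
  | inr hΩ =>
  rcases Nat.eq_zero_or_pos l with hl | hl
  · subst hl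
    refine ⟨1, one_pos, 2, one_lt_two, fun ω v hv => absurd ?_ hv⟩
    funext i
    exact absurd i.2 (by omega)
  haveI : Nonempty (Fin (2*l)) := ⟨⟨0, by omega⟩⟩
  -- continuity
  have hBc : ∀ n : ℤ, Continuous (fun ω => transfer T.toEquiv A n ω) :=
    fun n => transfer_continuous T A hA hSL n
  have hF : ∀ n : ℤ,
      Continuous (fun p : Ω × (Fin (2*l) → ℂ) => ‖(transfer T.toEquiv A n p.1).mulVec p.2‖) :=
    fun n => (Continuous.matrix_mulVec ((hBc n).comp continuous_fst) continuous_snd).norm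
  -- the compact set of unit pairs
  set K : Set (Ω × (Fin (2*l) → ℂ)) := Set.univ ×ˢ Metric.sphere 0 1 with hKdef
  have hKc : IsCompact K := isCompact_univ.prod (isCompact_sphere 0 1)
  have hKne : K.Nonempty := by
    refine ⟨(hΩ.some, fun _ => (1:ℂ)), Set.mem_univ _, ?_⟩
    rw [mem_sphere_zero_iff_norm, pi_norm_const]
    simp
  have hcover : K ⊆ ⋃ n : ℤ, {p : Ω × (Fin (2*l) → ℂ) |
      1 < ‖(transfer T.toEquiv A n p.1).mulVec p.2‖} := by
    rintro ⟨ω, v⟩ ⟨-, hv⟩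
    obtain ⟨n, hn⟩ := hcon ω v (mem_sphere_zero_iff_norm.mp hv)
    exact Set.mem_iUnion.mpr ⟨n, hn⟩
  obtain ⟨t, ht⟩ := hKc.elim_finite_subcover _
    (fun n => isOpen_lt continuous_const (hF n)) hcover
  set R : ℕ := max 1 (t.sup Int.natAbs) with hRdef
  have hR1 : 1 ≤ R := le_max_left _ _
  have hIcc : (Finset.Icc (-(R:ℤ)) (R:ℤ)).Nonempty := by
    rw [Finset.nonempty_Icc]; omega
  have hwin : ∀ p ∈ K, ∃ n : ℤ, |n| ≤ (R:ℤ) ∧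
      1 < ‖(transfer T.toEquiv A n p.1).mulVec p.2‖ := by
    intro p hp
    obtain ⟨n, hnt, hn⟩ := Set.mem_iUnion₂.mp (ht hp)
    refine ⟨n, ?_, hn⟩
    have h1 : n.natAbs ≤ t.sup Int.natAbs := Finset.le_sup hnt
    have h2 : n.natAbs ≤ R := le_trans h1 (le_max_right _ _)
    rw [abs_le]; omega
  -- minimal expansion ε over the compact set
  set g : Ω × (Fin (2*l) → ℂ) → ℝ :=
    fun p => (Finset.Icc (-(R:ℤ)) (R:ℤ)).sup' hIcc
      (fun n => ‖(transfer T.toEquiv A n p.1).mulVec p.2‖) with hgdef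
  have hgc : Continuous g := continuous_finset_sup' hIcc _ (fun n => hF n)
  obtain ⟨p₀, hp₀K, hmin0⟩ := hKc.exists_isMinOn hKne hgc.continuousOn
  have hmin := isMinOn_iff.mp hmin0
  have hgp₀ : 1 < g p₀ := by
    obtain ⟨n, hn1, hn2⟩ := hwin p₀ hp₀K
    calc (1:ℝ) < ‖(transfer T.toEquiv A n p₀.1).mulVec p₀.2‖ := hn2
      _ ≤ g p₀ := by
          rw [hgdef]
          exact Finset.le_sup' (fun n => ‖(transfer T.toEquiv A n p₀.1).mulVec p₀.2‖)
            (Finset.mem_Icc.mpr (abs_le.mp hn1))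
  set ε : ℝ := g p₀ - 1 with hεdef
  have hε0 : 0 < ε := by rw [hεdef]; linarith
  have hexpand : ∀ (ω : Ω) (v : Fin (2*l) → ℂ), ‖v‖ = 1 →
      ∃ r : ℤ, |r| ≤ (R:ℤ) ∧ 1 + ε ≤ ‖(transfer T.toEquiv A r ω).mulVec v‖ := by
    intro ω v hv
    have hmem : (ω, v) ∈ K := ⟨Set.mem_univ _, mem_sphere_zero_iff_norm.mpr hv⟩
    obtain ⟨n, hnmem, hne⟩ := Finset.exists_mem_eq_sup' hIcc
      (fun n => ‖(transfer T.toEquiv A n ω).mulVec v‖)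
    refine ⟨n, abs_le.mpr (Finset.mem_Icc.mp hnmem), ?_⟩
    have h1 := hmin (ω, v) hmem
    have h2 : g (ω, v) = ‖(transfer T.toEquiv A n ω).mulVec v‖ := hne
    rw [hεdef]
    calc 1 + (g p₀ - 1) = g p₀ := by ring
      _ ≤ g (ω, v) := h1
      _ = _ := h2
  -- the uniform bound C on finite windows
  set h : Ω → ℝ := fun ω => (Finset.Icc (-(R:ℤ)) (R:ℤ)).sup' hIcc
    (fun r => opBound (transfer T.toEquiv A r ω)) with hhdef
  have hhc : Continuous h := continuous_finset_sup' hIcc _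
    (fun r => continuous_opBound (hBc r))
  obtain ⟨ω₀, -, hmax0⟩ := isCompact_univ.exists_isMaxOn Set.univ_nonempty hhc.continuousOn
  have hmax := isMaxOn_iff.mp hmax0
  set C : ℝ := max 2 (h ω₀) with hCdef
  have hC2 : 2 ≤ C := le_max_left _ _
  have hCbound : ∀ (ω : Ω) (r : ℤ), |r| ≤ (R:ℤ) → ∀ w : Fin (2*l) → ℂ,
      ‖(transfer T.toEquiv A r ω).mulVec w‖ ≤ C * ‖w‖ := by
    intro ω r hr w
    calc ‖(transfer T.toEquiv A r ω).mulVec w‖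
        ≤ opBound (transfer T.toEquiv A r ω) * ‖w‖ := norm_mulVec_le _ _
      _ ≤ h ω * ‖w‖ := by
          have hle : opBound (transfer T.toEquiv A r ω) ≤ h ω := by
            rw [hhdef]
            exact Finset.le_sup' (fun r => opBound (transfer T.toEquiv A r ω))
              (Finset.mem_Icc.mpr (abs_le.mp hr))
          exact mul_le_mul_of_nonneg_right hle (norm_nonneg w)
      _ ≤ C * ‖w‖ := mul_le_mul_of_nonneg_right
          (le_trans (hmax ω (Set.mem_univ ω)) (le_max_right _ _)) (norm_nonneg w)
  -- apply the abstract growth dichotomy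
  obtain ⟨β, hβ, lam, hlam, hmain⟩ := growth_main C ε R hC2 hε0 hR1
  refine ⟨β, hβ, lam, hlam, ?_⟩
  intro ω v hv
  have hnv : 0 < ‖v‖ := norm_pos_iff.mpr hv
  set u : Fin (2*l) → ℂ := ‖v‖⁻¹ • v with hudef
  have hu1 : ‖u‖ = 1 := by
    rw [hudef, norm_smul, norm_inv, norm_norm, inv_mul_cancel₀ (ne_of_gt hnv)]
  have hune : u ≠ 0 := by
    intro h0
    rw [h0, norm_zero] at hu1
    exact one_ne_zero hu1.symm
  set f : ℤ → ℝ := fun n => ‖(transfer T.toEquiv A n ω).mulVec u‖ with hfdef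
  have hf0 : f 0 = 1 := by
    rw [hfdef]
    simp only [transfer_zero, Matrix.one_mulVec]
    exact hu1
  have hfpos : ∀ n, 0 < f n := by
    intro n
    apply norm_pos_iff.mpr
    exact mulVec_ne_zero _ (transfer_det T.toEquiv A hSL n ω) hune
  have hstep : ∀ n m : ℤ, |m| ≤ (R:ℤ) → f (n + m) ≤ C * f n := by
    intro n m hm
    have hc : transfer T.toEquiv A (n + m) ω
        = transfer T.toEquiv A m ((T.toEquiv ^ n) ω) * transfer T.toEquiv A n ω := by
      rw [show n + m = m + n by ring]
      exact transfer_cocycle T.toEquiv A hSL m n ω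
    rw [hfdef]
    simp only
    rw [hc, ← Matrix.mulVec_mulVec]
    exact hCbound _ m hm _
  have hexp : ∀ n : ℤ, ∃ r : ℤ, |r| ≤ (R:ℤ) ∧ (1+ε) * f n ≤ f (n + r) := by
    intro n
    set w := (transfer T.toEquiv A n ω).mulVec u with hwdef
    have hwpos : 0 < ‖w‖ := hfpos n
    obtain ⟨r, hr1, hr2⟩ := hexpand ((T.toEquiv ^ n) ω) (‖w‖⁻¹ • w)
      (by rw [norm_smul, norm_inv, norm_norm, inv_mul_cancel₀ (ne_of_gt hwpos)])
    refine ⟨r, hr1, ?_⟩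
    rw [Matrix.mulVec_smul, norm_smul, norm_inv, norm_norm] at hr2
    have hc : f (n + r) = ‖(transfer T.toEquiv A r ((T.toEquiv ^ n) ω)).mulVec w‖ := by
      rw [hfdef]
      simp only
      rw [hwdef, Matrix.mulVec_mulVec, show n + r = r + n by ring,
        transfer_cocycle T.toEquiv A hSL r n ω]
    rw [hc]
    have hfw : f n = ‖w‖ := rfl
    rw [hfw]
    have := mul_le_mul_of_nonneg_right hr2 (norm_nonneg w)
    calc (1+ε) * ‖w‖ ≤ ‖w‖⁻¹ * ‖(transfer T.toEquiv A r ((T.toEquiv ^ n) ω)).mulVec w‖ * ‖w‖ :=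
          this
      _ = ‖(transfer T.toEquiv A r ((T.toEquiv ^ n) ω)).mulVec w‖ := by
          field_simp
  have hd := hmain f hf0 hfpos hstep hexp
  have hvu : ∀ n : ℤ, ‖(transfer T.toEquiv A n ω).mulVec v‖ = ‖v‖ * f n := by
    intro n
    have hvs : v = ‖v‖ • u := by
      rw [hudef, smul_smul, mul_inv_cancel₀ (ne_of_gt hnv), one_smul]
    rw [hfdef]
    simp only
    conv_lhs => rw [hvs]
    rw [Matrix.mulVec_smul, norm_smul, Real.norm_of_nonneg (le_of_lt hnv)]
  rcases hd with hcase | hcase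
  · left
    intro n
    rw [hvu (n:ℤ)]
    have h1 := hcase n
    nlinarith [pow_pos (lt_trans one_pos hlam) n]
  · right
    intro n
    rw [hvu (-(n:ℤ))]
    have h1 := hcase n
    nlinarith [pow_pos (lt_trans one_pos hlam) n]
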